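/- arXiv:2211.07559 — 2 statements merged into one kernel-verified Lean document; each statement's English description precedes it below -/
import Mathlib

section
/- In the Lusternik–Schnirelmann setting, if d_j = d_{j+1} for some j, then the critical set Cr(d_j) is infinite. -/
/-- The minimax values of Lusternik–Schnirelmann theory:
`d j = inf { sup σ(S) : S ⊆ M, I(S) ≥ j }`. -/
noncomputable def lsMinimax {M : Type*} [TopologicalSpace M]
    (I : Set M → ℕ) (σ : M → ℝ) (j : ℕ) : ℝ :=
  sInf {r : ℝ | ∃ S : Set M, j ≤ I S ∧ r = sSup (σ '' S)}

/-- The critical set at level `d`: fixed points of the flow on which `σ` takes the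
value `d`. -/
def lsCrit {M : Type*} [TopologicalSpace M] (φ : ℝ → M → M) (σ : M → ℝ) (d : ℝ) :
    Set M :=
  {x : M | σ x = d ∧ ∀ t : ℝ, φ t x = x}

/-- In the Lusternik–Schnirelmann setting, if `d_j = d_{j+1}` for
some `j`, then the critical set `Cr(d_j)` is infinite. -/
theorem ls_crit_infinite_of_eq
    (M : Type*) [TopologicalSpace M] [CompactSpace M] [Nonempty M]
    (φ : ℝ → M → M)
    (hφcont : Continuous fun p : ℝ × M => φ p.1 p.2)
    (hφzero : ∀ x, φ 0 x = x)
    (hφadd : ∀ s t x, φ (s + t) x = φ s (φ t x))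
    (I : Set M → ℕ)
    (hmono : ∀ S T : Set M, S ⊆ T → I S ≤ I T)
    (hnbhd : ∀ S : Set M, ∃ U : Set M, IsOpen U ∧ S ⊆ U ∧ I U = I S)
    (hsub : ∀ S T : Set M, I (S ∪ T) ≤ I S + I T)
    (hflow : ∀ (t : ℝ) (S : Set M), I (φ t '' S) = I S)
    (hfin : ∀ S : Set M, S.Finite → S.Nonempty → I S = 1)
    (σ : M → ℝ) (hσ : Continuous σ)
    (hdec : ∀ x : M, (∃ t, φ t x ≠ x) → StrictAnti fun t : ℝ => σ (φ t x))
    (hdefm : ∀ (d : ℝ) (U : Set M), IsOpen U → lsCrit φ σ d ⊆ U →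
      ∃ ε > (0 : ℝ), ∀ x : M, σ x ≤ d + ε → x ∉ U → σ (φ 1 x) ≤ d - ε)
    (j : ℕ) (hj : 1 ≤ j) (hj' : j + 1 ≤ I Set.univ)
    (heq : lsMinimax I σ j = lsMinimax I σ (j + 1)) :
    (lsCrit φ σ (lsMinimax I σ j)).Infinite := by
  by_contra hinf
  rw [Set.not_infinite] at hinf
  set d := lsMinimax I σ j with hd
  have hbdd : BddAbove (Set.range σ) := by
    have h := (isCompact_univ.image hσ).bddAbove
    simpa [Set.image_univ] using h
  obtain ⟨b, hb⟩ : BddBelow (Set.range σ) := by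
    have h := (isCompact_univ.image hσ).bddBelow
    simpa [Set.image_univ] using h
  have hlow : ∀ S : Set M, min b 0 ≤ sSup (σ '' S) := by
    intro S
    rcases S.eq_empty_or_nonempty with h | ⟨x, hx⟩
    · simp [h, Real.sSup_empty]
    · have h1 : σ x ≤ sSup (σ '' S) :=
        le_csSup (hbdd.mono (Set.image_subset_range _ _)) ⟨x, hx, rfl⟩
      have h2 : b ≤ σ x := hb ⟨x, rfl⟩
      exact le_trans (min_le_left _ _) (h2.trans h1)
  have hbddset : ∀ k : ℕ, BddBelow {r : ℝ | ∃ S : Set M, k ≤ I S ∧ r = sSup (σ '' S)} :=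
    fun k => ⟨min b 0, fun r ⟨S, _, hr⟩ => hr ▸ hlow S⟩
  obtain ⟨x₀⟩ := ‹Nonempty M›
  have hcr1 : I (lsCrit φ σ d) ≤ 1 := by
    rcases (lsCrit φ σ d).eq_empty_or_nonempty with h | h
    · calc I (lsCrit φ σ d) ≤ I {x₀} := hmono _ _ (by simp [h])
        _ = 1 := hfin _ (Set.finite_singleton _) ⟨x₀, rfl⟩
    · exact le_of_eq (hfin _ hinf h)
  obtain ⟨U, hUopen, hUsub, hUI⟩ := hnbhd (lsCrit φ σ d)
  obtain ⟨ε, hε, hdef⟩ := hdefm d U hUopen hUsub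
  have hlt : lsMinimax I σ (j + 1) < d + ε := by rw [← heq]; linarith
  have hne : ({r : ℝ | ∃ S : Set M, j + 1 ≤ I S ∧ r = sSup (σ '' S)} : Set ℝ).Nonempty :=
    ⟨_, Set.univ, hj', rfl⟩
  rw [lsMinimax] at hlt
  obtain ⟨r, ⟨S, hSI, hrS⟩, hr⟩ := exists_lt_of_csInf_lt hne hlt
  have hIU : I U ≤ 1 := hUI ▸ hcr1
  have hSU : ¬ S ⊆ U := fun h => by have := hmono _ _ h; omega
  have hsdiff : (S \ U).Nonempty := Set.diff_nonempty.mpr hSU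
  have hIdiff : j ≤ I (S \ U) := by
    have h1 : I S ≤ I (S \ U) + I U :=
      le_trans (hmono _ _ (fun x hx => by
        by_cases h : x ∈ U
        exacts [Or.inr h, Or.inl ⟨hx, h⟩])) (hsub _ _)
    omega
  set T := φ 1 '' (S \ U) with hT
  have hIT : j ≤ I T := by rw [hT, hflow]; exact hIdiff
  have hTle : ∀ y ∈ σ '' T, y ≤ d - ε := by
    rintro _ ⟨_, ⟨x, ⟨hxS, hxU⟩, rfl⟩, rfl⟩
    apply hdef
    · have h1 : σ x ≤ sSup (σ '' S) :=
        le_csSup (hbdd.mono (Set.image_subset_range _ _)) ⟨x, hxS, rfl⟩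
      rw [← hrS] at h1
      linarith
    · exact hxU
  have hsup : sSup (σ '' T) ≤ d - ε := csSup_le ((hsdiff.image _).image _) hTle
  have hdle : d ≤ sSup (σ '' T) := by
    rw [hd, lsMinimax]
    exact csInf_le (hbddset j) ⟨T, hIT, rfl⟩
  linarith
end

section
/- Let M be a compact topological space, σ : M → ℝ continuous, φ a continuous flow on M with σ strictly decreasing along non-fixed orbits, d ∈ ℝ, Cr(d) the set of fixed points at level d, and U any open neighborhood of Cr(d). Then there exists ε > 0 such that every x with σ(x) ≤ d + ε and x ∉ U satisfies σ(φ(1, x)) ≤ d − ε. -/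
/-- deformation lemma. Let `M` be a compact topological space,
`σ : M → ℝ` continuous, `φ` a continuous flow on `M` with `σ` strictly decreasing
along non-fixed orbits, `d ∈ ℝ`, `Cr(d)` the set of fixed points at level `d`, and `U`
any open neighbourhood of `Cr(d)`. Then there exists `ε > 0` such that every `x` with
`σ(x) ≤ d + ε` and `x ∉ U` satisfies `σ(φ(1, x)) ≤ d − ε`. -/
theorem deformation_lemma
    (M : Type*) [TopologicalSpace M] [CompactSpace M]
    (φ : ℝ → M → M)
    (hφcont : Continuous fun p : ℝ × M => φ p.1 p.2)
    (hφzero : ∀ x, φ 0 x = x)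
    (hφadd : ∀ s t x, φ (s + t) x = φ s (φ t x))
    (σ : M → ℝ) (hσ : Continuous σ)
    (hdec : ∀ x : M, (∃ t, φ t x ≠ x) → StrictAnti fun t : ℝ => σ (φ t x))
    (d : ℝ) (U : Set M) (hU : IsOpen U)
    (hCr : {x : M | σ x = d ∧ ∀ t : ℝ, φ t x = x} ⊆ U) :
    ∃ ε > (0 : ℝ), ∀ x : M, σ x ≤ d + ε → x ∉ U → σ (φ 1 x) ≤ d - ε := by
  by_contra h
  push_neg at h
  -- continuity of x ↦ σ (φ 1 x)
  have hf : Continuous fun x : M => σ (φ 1 x) :=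
    hσ.comp (hφcont.comp (continuous_const.prodMk continuous_id))
  -- nested closed sets
  set C : ℕ → Set M := fun n =>
    {x : M | σ x ≤ d + 1 / (n + 1) ∧ x ∉ U ∧ d - 1 / (n + 1) ≤ σ (φ 1 x)} with hC
  have hpos : ∀ n : ℕ, (0 : ℝ) < 1 / (n + 1) := fun n => by positivity
  have hclosed : ∀ n, IsClosed (C n) := by
    intro n
    exact ((isClosed_le hσ continuous_const).inter
      ((hU.isClosed_compl).inter (isClosed_le continuous_const hf)))
  have hne : ∀ n, (C n).Nonempty := by
    intro n
    obtain ⟨x, hx1, hx2, hx3⟩ := h (1 / (n + 1)) (hpos n)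
    exact ⟨x, hx1, hx2, le_of_lt hx3⟩
  have hmono : ∀ n, C (n + 1) ⊆ C n := by
    intro n x hx
    have hle : (1 : ℝ) / (n + 1 + 1) ≤ 1 / (n + 1) := by
      apply one_div_le_one_div_of_le (by positivity)
      push_cast; linarith
    refine ⟨hx.1.trans (by push_cast at hle ⊢; linarith), hx.2.1, le_trans ?_ hx.2.2⟩
    push_cast at hle ⊢; linarith
  obtain ⟨x, hx⟩ := IsCompact.nonempty_iInter_of_sequence_nonempty_isCompact_isClosed
    C hmono hne ((hclosed 0).isCompact) hclosed
  simp only [Set.mem_iInter] at hx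
  have hxU : x ∉ U := (hx 0).2.1
  have h1 : σ x ≤ d := by
    apply le_of_forall_pos_le_add
    intro ε hε
    obtain ⟨n, hn⟩ := exists_nat_one_div_lt hε
    exact (hx n).1.trans (by linarith)
  have h2 : d ≤ σ (φ 1 x) := by
    have : ∀ ε > (0 : ℝ), d ≤ σ (φ 1 x) + ε := by
      intro ε hε
      obtain ⟨n, hn⟩ := exists_nat_one_div_lt hε
      have := (hx n).2.2
      linarith
    exact le_of_forall_pos_le_add this
  by_cases hfix : ∃ t, φ t x ≠ x
  · have := hdec x hfix (show (0:ℝ) < 1 by norm_num)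
    simp only [hφzero] at this
    linarith
  · push_neg at hfix
    have hσx : σ x = d := by
      have := hfix 1
      rw [this] at h2
      linarith
    exact hxU (hCr ⟨hσx, hfix⟩)
end
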